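/- arXiv:2306.00289 — 2 statements merged into one kernel-verified Lean document; each statement's English description precedes it below -/
import Mathlib

section
/- Let H ∈ (1/2, 1) and 0 ≤ s ≤ t ≤ T. For any g ∈ L²([0,T]), ∫_s^t u^{1/2-H} |g(u)| (∫_u^t r^{H-1/2}(r-u)^{H-3/2} dr) du ≤ (√(B(2-2H, 2H)) T^{H-1/2}/(H-1/2)) ‖g‖_{L²([0,T])} √(t-s), where B denotes the Beta function. -/
open Real MeasureTheory intervalIntegral

/-- The Beta function. -/
noncomputable def betaFn (a b : ℝ) : ℝ := Real.Gamma a * Real.Gamma b / Real.Gamma (a + b)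

lemma betaFn_integral {a b : ℝ} (ha : 0 < a) (hb : 0 < b) :
    ∫ x in (0:ℝ)..1, x ^ (a - 1) * (1 - x) ^ (b - 1) = betaFn a b := by
  set I : ℝ := ∫ x in (0:ℝ)..1, x ^ (a - 1) * (1 - x) ^ (b - 1) with hI
  have h := Complex.Gamma_mul_Gamma_eq_betaIntegral (s := (a:ℂ)) (t := (b:ℂ))
    (by simpa using ha) (by simpa using hb)
  have hcb : Complex.betaIntegral (a:ℂ) (b:ℂ) = (I : ℂ) := by
    rw [Complex.betaIntegral, hI, ← intervalIntegral.integral_ofReal]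
    refine intervalIntegral.integral_congr fun x hx => ?_
    rw [Set.uIcc_of_le (by norm_num : (0:ℝ) ≤ 1)] at hx
    rw [Complex.ofReal_mul, Complex.ofReal_cpow hx.1, Complex.ofReal_cpow (by linarith [hx.2] : (0:ℝ) ≤ 1 - x)]
    push_cast
    ring
  rw [hcb] at h
  rw [show ((a:ℂ) + (b:ℂ)) = ((a + b : ℝ) : ℂ) by push_cast; ring] at h
  rw [Complex.Gamma_ofReal, Complex.Gamma_ofReal, Complex.Gamma_ofReal] at h
  have h' : Real.Gamma a * Real.Gamma b = Real.Gamma (a + b) * I := by exact_mod_cast h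
  have hpos : 0 < Real.Gamma (a + b) := Real.Gamma_pos_of_pos (by linarith)
  rw [betaFn, h']
  field_simp

lemma beta_scaled {a b s t : ℝ} (ha : 0 < a) (hb : 0 < b) (hab : a + b = 2) (hst : s < t) :
    ∫ u in s..t, (u - s) ^ (a - 1) * (t - u) ^ (b - 1) = (t - s) * betaFn a b := by
  have hL : 0 < t - s := sub_pos.mpr hst
  have h1 : (∫ x in (0:ℝ)..(t - s), (fun u => (u - s) ^ (a - 1) * (t - u) ^ (b - 1)) (x + s))
      = ∫ u in s..t, (u - s) ^ (a - 1) * (t - u) ^ (b - 1) := by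
    rw [intervalIntegral.integral_comp_add_right (fun u => (u - s) ^ (a - 1) * (t - u) ^ (b - 1)) s,
      zero_add, sub_add_cancel]
  rw [← h1]
  have h2 : (∫ x in (0:ℝ)..(t - s), (fun u => (u - s) ^ (a - 1) * (t - u) ^ (b - 1)) (x + s))
      = ∫ x in (0:ℝ)..(t - s), x ^ (a - 1) * ((t - s) - x) ^ (b - 1) := by
    refine intervalIntegral.integral_congr fun x _ => ?_
    simp only [add_sub_cancel_right]
    congr 2
    ring
  rw [h2]
  have h3 : (∫ y in (0:ℝ)..1, (fun x => x ^ (a - 1) * ((t - s) - x) ^ (b - 1)) ((t - s) * y))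
      = (t - s)⁻¹ • ∫ x in (0:ℝ)..(t - s), x ^ (a - 1) * ((t - s) - x) ^ (b - 1) := by
    rw [intervalIntegral.integral_comp_mul_left (fun x => x ^ (a - 1) * ((t - s) - x) ^ (b - 1))
      hL.ne', mul_zero, mul_one]
  have h4 : ∫ x in (0:ℝ)..(t - s), x ^ (a - 1) * ((t - s) - x) ^ (b - 1)
      = (t - s) • ∫ y in (0:ℝ)..1, (fun x => x ^ (a - 1) * ((t - s) - x) ^ (b - 1)) ((t - s) * y) := by
    rw [h3, smul_smul, mul_inv_cancel₀ hL.ne', one_smul]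
  rw [h4]
  have h5 : (∫ y in (0:ℝ)..1, (fun x => x ^ (a - 1) * ((t - s) - x) ^ (b - 1)) ((t - s) * y))
      = ∫ y in (0:ℝ)..1, y ^ (a - 1) * (1 - y) ^ (b - 1) := by
    refine intervalIntegral.integral_congr fun y hy => ?_
    rw [Set.uIcc_of_le (by norm_num : (0:ℝ) ≤ 1)] at hy
    simp only
    have e1 : (t - s) - (t - s) * y = (t - s) * (1 - y) := by ring
    rw [e1, Real.mul_rpow hL.le hy.1, Real.mul_rpow hL.le (by linarith [hy.2])]
    have : (t - s) ^ (a - 1) * y ^ (a - 1) * ((t - s) ^ (b - 1) * (1 - y) ^ (b - 1))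
        = ((t - s) ^ (a - 1) * (t - s) ^ (b - 1)) * (y ^ (a - 1) * (1 - y) ^ (b - 1)) := by ring
    rw [this, ← Real.rpow_add hL, show a - 1 + (b - 1) = 0 by linarith, Real.rpow_zero, one_mul]
  rw [h5, betaFn_integral ha hb, smul_eq_mul]


lemma measurable_rpow_const (c : ℝ) : Measurable fun x : ℝ => x ^ c := by measurability

lemma inner_bound {H T t u : ℝ} (hH : H ∈ Set.Ioo (1/2 : ℝ) 1) (hu : 0 ≤ u) (hut : u ≤ t)
    (ht : t ≤ T) :
    ∫ r in u..t, r ^ (H - 1/2) * (r - u) ^ (H - 3/2)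
      ≤ T ^ (H - 1/2) * ((t - u) ^ (H - 1/2) / (H - 1/2)) := by
  obtain ⟨h1, h2⟩ := hH
  have hI : IntervalIntegrable (fun r => (r - u) ^ (H - 3/2)) volume u t := by
    have := (intervalIntegrable_rpow' (a := 0) (b := t - u) (r := H - 3/2)
      (by linarith)).comp_sub_right u
    simpa using this
  have hcont : ContinuousOn (fun r : ℝ => r ^ (H - 1/2)) (Set.uIcc u t) := by
    apply ContinuousOn.rpow_const continuousOn_id
    intro x _; right; linarith
  have hfint : IntervalIntegrable (fun r => r ^ (H - 1/2) * (r - u) ^ (H - 3/2)) volume u t :=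
    hI.continuousOn_mul hcont
  have hgint : IntervalIntegrable (fun r => T ^ (H - 1/2) * (r - u) ^ (H - 3/2)) volume u t :=
    hI.const_mul _
  have hmono := intervalIntegral.integral_mono_on hut hfint hgint (fun r hr => by
    refine mul_le_mul_of_nonneg_right ?_ (Real.rpow_nonneg (by linarith [hr.1]) _)
    exact Real.rpow_le_rpow (le_trans hu hr.1) (le_trans hr.2 ht) (by linarith))
  refine hmono.trans (le_of_eq ?_)
  rw [intervalIntegral.integral_const_mul]
  congr 1
  rw [intervalIntegral.integral_comp_sub_right (fun x => x ^ (H - 3/2)) u, sub_self,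
    integral_rpow (Or.inl (by linarith)), show H - 3/2 + 1 = H - 1/2 by ring,
    Real.zero_rpow (by linarith), sub_zero]

theorem stmt_10 (H T s t : ℝ) (hH : H ∈ Set.Ioo (1/2 : ℝ) 1)
    (hs : 0 ≤ s) (hst : s ≤ t) (ht : t ≤ T)
    (g : ℝ → ℝ) (hg : IntegrableOn (fun u => (g u)^2) (Set.Icc 0 T)) :
    ∫ u in s..t, u ^ (1/2 - H) * |g u| *
        (∫ r in u..t, r ^ (H - 1/2) * (r - u) ^ (H - 3/2))
      ≤ (Real.sqrt (betaFn (2 - 2*H) (2*H)) * T ^ (H - 1/2) / (H - 1/2)) *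
        (∫ u in (0:ℝ)..T, (g u)^2) ^ (1/2 : ℝ) * Real.sqrt (t - s) := by
  obtain ⟨h1, h2⟩ := hH
  have hT : 0 ≤ T := le_trans (le_trans hs hst) ht
  have hβpos : 0 < betaFn (2 - 2*H) (2*H) := by
    have g1 : 0 < Real.Gamma (2 - 2*H) := Real.Gamma_pos_of_pos (by linarith)
    have g2 : 0 < Real.Gamma (2*H) := Real.Gamma_pos_of_pos (by linarith)
    have g3 : 0 < Real.Gamma (2 - 2*H + 2*H) := Real.Gamma_pos_of_pos (by linarith)
    exact div_pos (mul_pos g1 g2) g3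
  have hgT : (0:ℝ) ≤ ∫ u in (0:ℝ)..T, (g u)^2 :=
    intervalIntegral.integral_nonneg hT (fun u _ => sq_nonneg _)
  have hRHS : 0 ≤ (Real.sqrt (betaFn (2 - 2*H) (2*H)) * T ^ (H - 1/2) / (H - 1/2)) *
      (∫ u in (0:ℝ)..T, (g u)^2) ^ (1/2 : ℝ) * Real.sqrt (t - s) := by
    apply mul_nonneg (mul_nonneg _ (Real.rpow_nonneg hgT _)) (Real.sqrt_nonneg _)
    exact div_nonneg (mul_nonneg (Real.sqrt_nonneg _) (Real.rpow_nonneg hT _)) (by linarith)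
  by_cases hF : IntervalIntegrable (fun u => u ^ (1/2 - H) * |g u| *
      (∫ r in u..t, r ^ (H - 1/2) * (r - u) ^ (H - 3/2))) volume s t
  swap
  · rw [intervalIntegral.integral_undef hF]; exact hRHS
  rcases eq_or_lt_of_le hst with rfl | hslt
  · rw [intervalIntegral.integral_same]; exact hRHS
  -- now s < t
  set ν : Measure ℝ := volume.restrict (Set.Ioc s t) with hν
  set C : ℝ := T ^ (H - 1/2) / (H - 1/2) with hC
  have hC0 : 0 ≤ C := div_nonneg (Real.rpow_nonneg hT _) (by linarith)
  set φ : ℝ → ℝ := fun u => u ^ (1/2 - H) * (t - u) ^ (H - 1/2) with hφ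
  have hφm : Measurable φ :=
    (measurable_rpow_const _).mul
      ((measurable_rpow_const _).comp (measurable_const.sub measurable_id))
  set ψ : ℝ → ℝ := fun u => u ^ (1 - 2*H) * (t - u) ^ (2*H - 1) with hψ
  have hsq : Set.EqOn ψ (fun u => φ u ^ 2) (Set.Ioc s t) := by
    intro u hu
    have hu0 : 0 ≤ u := le_trans hs hu.1.le
    have htu : 0 ≤ t - u := sub_nonneg.mpr hu.2
    simp only [hφ, hψ, mul_pow]
    rw [← Real.rpow_natCast (u ^ (1/2 - H)) 2, ← Real.rpow_natCast ((t - u) ^ (H - 1/2)) 2,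
      ← Real.rpow_mul hu0, ← Real.rpow_mul htu]
    norm_num
    rw [show (1/2 - H) * 2 = 1 - 2*H by ring, show (H - 1/2) * 2 = 2*H - 1 by ring]
  -- integrability of ψ on Ioc s t
  have hψint : IntervalIntegrable ψ volume s t := by
    have hbase : IntervalIntegrable (fun u : ℝ => u ^ (1 - 2*H)) volume s t := by
      apply (intervalIntegrable_rpow' (a := 0) (b := t) (by linarith)).mono_set
      rw [Set.uIcc_of_le hst, Set.uIcc_of_le (le_trans hs hst)]
      exact Set.Icc_subset_Icc hs le_rfl
    apply hbase.mul_continuousOn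
    apply ContinuousOn.rpow_const (continuousOn_const.sub continuousOn_id)
    intro x _; right; linarith
  have hψInt : IntegrableOn ψ (Set.Ioc s t) :=
    (intervalIntegrable_iff_integrableOn_Ioc_of_le hst).mp hψint
  have hφ2Int : Integrable (fun u => φ u ^ 2) ν :=
    hψInt.congr_fun hsq measurableSet_Ioc
  have hφmem : MemLp φ 2 ν :=
    (memLp_two_iff_integrable_sq hφm.aestronglyMeasurable).mpr hφ2Int
  -- |g| is Memℒp 2
  have hsub : Set.Ioc s t ⊆ Set.Icc 0 T :=
    Set.Ioc_subset_Icc_self.trans (Set.Icc_subset_Icc hs ht)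
  have hg2ν : Integrable (fun u => (g u)^2) ν := hg.mono_set hsub
  have hgabs_m : AEStronglyMeasurable (fun u => |g u|) ν := by
    have h2 : AEMeasurable (fun u => (g u)^2) ν := hg2ν.aemeasurable
    have := (Real.continuous_sqrt.measurable.comp_aemeasurable h2)
    refine (this.congr ?_).aestronglyMeasurable
    filter_upwards with u
    exact (Real.sqrt_sq_eq_abs (g u))
  have hgmem : MemLp (fun u => |g u|) 2 ν := by
    refine (memLp_two_iff_integrable_sq hgabs_m).mpr ?_
    refine hg2ν.congr ?_
    filter_upwards with u
    rw [sq_abs]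
  -- product integrable
  have hprod : Integrable (fun u => φ u * |g u|) ν := by
    have := (hgmem.smul (φ := φ) hφmem (r := 1)).integrable le_rfl
    simpa [smul_eq_mul, Pi.mul_def] using this
  -- Hölder
  have hφnn : 0 ≤ᵐ[ν] φ := by
    rw [hν]
    filter_upwards [ae_restrict_mem measurableSet_Ioc] with u hu
    exact mul_nonneg (Real.rpow_nonneg (le_trans hs hu.1.le) _)
      (Real.rpow_nonneg (sub_nonneg.mpr hu.2) _)
  have hgnn : 0 ≤ᵐ[ν] fun u => |g u| := Filter.Eventually.of_forall fun u => abs_nonneg _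
  have holder := MeasureTheory.integral_mul_le_Lp_mul_Lq_of_nonneg (μ := ν)
    Real.HolderConjugate.two_two hφnn hgnn
    (by simpa using hφmem) (by simpa using hgmem)
  have e2 : ∀ x : ℝ, x ^ (2:ℝ) = x ^ 2 := fun x => by
    rw [show (2:ℝ) = ((2:ℕ):ℝ) by norm_num, Real.rpow_natCast]
  simp_rw [e2] at holder
  -- bound ∫ φ²
  have hA : ∫ a, φ a ^ 2 ∂ν ≤ (t - s) * betaFn (2 - 2*H) (2*H) := by
    have e1 : ∫ a, φ a ^ 2 ∂ν = ∫ a in Set.Ioc s t, ψ a :=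
      (setIntegral_congr_fun measurableSet_Ioc hsq).symm
    rw [e1]
    set χ : ℝ → ℝ := fun u => (u - s) ^ (1 - 2*H) * (t - u) ^ (2*H - 1) with hχ
    have hχint : IntervalIntegrable χ volume s t := by
      have hbase : IntervalIntegrable (fun u : ℝ => (u - s) ^ (1 - 2*H)) volume s t := by
        have := (intervalIntegrable_rpow' (a := 0) (b := t - s) (r := 1 - 2*H)
          (by linarith)).comp_sub_right s
        simpa using this
      apply hbase.mul_continuousOn
      apply ContinuousOn.rpow_const (continuousOn_const.sub continuousOn_id)
      intro x _; right; linarith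
    have hχInt : IntegrableOn χ (Set.Ioc s t) :=
      (intervalIntegrable_iff_integrableOn_Ioc_of_le hst).mp hχint
    have hle : ∀ u ∈ Set.Ioc s t, ψ u ≤ χ u := by
      intro u hu
      refine mul_le_mul_of_nonneg_right ?_ (Real.rpow_nonneg (sub_nonneg.mpr hu.2) _)
      exact Real.rpow_le_rpow_of_nonpos (sub_pos.mpr hu.1) (by linarith [hs]) (by linarith)
    refine (setIntegral_mono_on hψInt hχInt measurableSet_Ioc hle).trans (le_of_eq ?_)
    rw [← intervalIntegral.integral_of_le hst]
    have hb := beta_scaled (a := 2 - 2*H) (b := 2*H) (s := s) (t := t)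
      (by linarith) (by linarith) (by ring) hslt
    rw [show (2 - 2*H - 1) = 1 - 2*H by ring] at hb
    exact hb
  -- bound ∫ |g|²
  have hB : ∫ a, |g a| ^ 2 ∂ν ≤ ∫ u in (0:ℝ)..T, (g u)^2 := by
    have e1 : ∫ a, |g a| ^ 2 ∂ν = ∫ a in Set.Ioc s t, (g a)^2 := by
      refine integral_congr_ae ?_
      filter_upwards with a
      rw [sq_abs]
    rw [e1, intervalIntegral.integral_of_le hT]
    refine setIntegral_mono_set (hg.mono_set Set.Ioc_subset_Icc_self)
      (Filter.Eventually.of_forall fun a => sq_nonneg _) ?_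
    exact (Set.Ioc_subset_Ioc hs ht).eventuallyLE
  -- pointwise comparison
  have hFG : ∀ u ∈ Set.Icc s t, u ^ (1/2 - H) * |g u| *
      (∫ r in u..t, r ^ (H - 1/2) * (r - u) ^ (H - 3/2)) ≤ C * (φ u * |g u|) := by
    intro u hu
    have hu0 : 0 ≤ u := le_trans hs hu.1
    have hb := inner_bound ⟨h1, h2⟩ hu0 hu.2 ht
    calc u ^ (1/2 - H) * |g u| * (∫ r in u..t, r ^ (H - 1/2) * (r - u) ^ (H - 3/2))
        ≤ u ^ (1/2 - H) * |g u| * (T ^ (H - 1/2) * ((t - u) ^ (H - 1/2) / (H - 1/2))) :=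
          mul_le_mul_of_nonneg_left hb (mul_nonneg (Real.rpow_nonneg hu0 _) (abs_nonneg _))
      _ = C * (φ u * |g u|) := by rw [hC, hφ]; ring
  have hGint : IntervalIntegrable (fun u => C * (φ u * |g u|)) volume s t :=
    ((intervalIntegrable_iff_integrableOn_Ioc_of_le hst).mpr hprod).const_mul C
  have step1 := intervalIntegral.integral_mono_on hst hF hGint hFG
  have step2 : (∫ u in s..t, C * (φ u * |g u|)) = C * ∫ a, φ a * |g a| ∂ν := by
    rw [intervalIntegral.integral_const_mul, intervalIntegral.integral_of_le hst]
  calc (∫ u in s..t, u ^ (1/2 - H) * |g u| *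
        (∫ r in u..t, r ^ (H - 1/2) * (r - u) ^ (H - 3/2)))
      ≤ ∫ u in s..t, C * (φ u * |g u|) := step1
    _ = C * ∫ a, φ a * |g a| ∂ν := step2
    _ ≤ C * (((t - s) * betaFn (2 - 2*H) (2*H)) ^ (1/2:ℝ) *
          (∫ u in (0:ℝ)..T, (g u)^2) ^ (1/2:ℝ)) := by
        refine mul_le_mul_of_nonneg_left (holder.trans ?_) hC0
        refine mul_le_mul ?_ ?_ (Real.rpow_nonneg (integral_nonneg fun a => sq_nonneg _) _)
          (Real.rpow_nonneg (mul_nonneg (by linarith) hβpos.le) _)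
        · exact Real.rpow_le_rpow (integral_nonneg fun a => sq_nonneg _) hA (by norm_num)
        · exact Real.rpow_le_rpow (integral_nonneg fun a => sq_nonneg _) hB (by norm_num)
    _ = (Real.sqrt (betaFn (2 - 2*H) (2*H)) * T ^ (H - 1/2) / (H - 1/2)) *
          (∫ u in (0:ℝ)..T, (g u)^2) ^ (1/2 : ℝ) * Real.sqrt (t - s) := by
        rw [← Real.sqrt_eq_rpow, Real.sqrt_mul (by linarith : (0:ℝ) ≤ t - s), hC]
        ring
end

section
/- Let H ∈ (1/2,1), T > 0, and let g : [0,T] → ℝ be M-bounded and measurable. Then for all 0 ≤ s ≤ t ≤ T, | ∫_s^t ∫_0^r (r/u)^{H-1/2} (r-u)^{H-3/2} k(u) du dr | ≤ C(T,H)·‖k‖_{L²([0,T])}·((t-s)^{H-1/2} + (t-s)^{1/2}) for every k ∈ L²([0,T]), where C(T,H) depends only on T and H. -/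
open Real MeasureTheory intervalIntegral
open scoped ENNReal

namespace Stmt19Aux

lemma lint_rpow (b c : ℝ) (hb : 0 ≤ b) (hc : -1 < c) :
    ∫⁻ u in Set.Ioc 0 b, ENNReal.ofReal (u ^ c) = ENNReal.ofReal (b ^ (c+1) / (c+1)) := by
  have h1 : IntervalIntegrable (fun u : ℝ => u ^ c) volume 0 b :=
    intervalIntegral.intervalIntegrable_rpow' hc
  have h2 : IntegrableOn (fun u : ℝ => u ^ c) (Set.Ioc 0 b) :=
    (intervalIntegrable_iff_integrableOn_Ioc_of_le hb).mp h1
  rw [← MeasureTheory.ofReal_integral_eq_lintegral_ofReal h2 ?_]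
  · congr 1
    rw [← intervalIntegral.integral_of_le hb, integral_rpow (Or.inl hc),
      Real.zero_rpow (by linarith), sub_zero]
  · filter_upwards [ae_restrict_mem measurableSet_Ioc] with u hu
    exact Real.rpow_nonneg hu.1.le c

lemma lint_rpow_sub (c d e : ℝ) (hcd : c ≤ d) (he : -1 < e) :
    ∫⁻ x in Set.Ioc c d, ENNReal.ofReal ((d - x) ^ e)
      = ENNReal.ofReal ((d - c) ^ (e+1) / (e+1)) := by
  have h1 : IntervalIntegrable (fun x : ℝ => x ^ e) volume 0 (d - c) :=
    intervalIntegral.intervalIntegrable_rpow' he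
  have h2 : IntervalIntegrable (fun x : ℝ => (d - x) ^ e) volume c d := by
    have := (h1.comp_sub_left d).symm
    simpa using this
  have h3 : IntegrableOn (fun x : ℝ => (d - x) ^ e) (Set.Ioc c d) :=
    (intervalIntegrable_iff_integrableOn_Ioc_of_le hcd).mp h2
  rw [← MeasureTheory.ofReal_integral_eq_lintegral_ofReal h3 ?_]
  · congr 1
    rw [← intervalIntegral.integral_of_le hcd,
      intervalIntegral.integral_comp_sub_left (fun x : ℝ => x ^ e) d, sub_self,
      integral_rpow (Or.inl he), Real.zero_rpow (by linarith), sub_zero]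
  · filter_upwards [ae_restrict_mem measurableSet_Ioc] with x hx
    exact Real.rpow_nonneg (by linarith [hx.2]) e

lemma lint_rpow_sub' (c d e : ℝ) (hcd : c ≤ d) (he : -1 < e) :
    ∫⁻ x in Set.Ioc c d, ENNReal.ofReal ((x - c) ^ e)
      = ENNReal.ofReal ((d - c) ^ (e+1) / (e+1)) := by
  have h1 : IntervalIntegrable (fun x : ℝ => x ^ e) volume 0 (d - c) :=
    intervalIntegral.intervalIntegrable_rpow' he
  have h2 : IntervalIntegrable (fun x : ℝ => (x - c) ^ e) volume c d := by
    have := h1.comp_sub_right c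
    simpa using this
  have h3 : IntegrableOn (fun x : ℝ => (x - c) ^ e) (Set.Ioc c d) :=
    (intervalIntegrable_iff_integrableOn_Ioc_of_le hcd).mp h2
  rw [← MeasureTheory.ofReal_integral_eq_lintegral_ofReal h3 ?_]
  · congr 1
    rw [← intervalIntegral.integral_of_le hcd,
      intervalIntegral.integral_comp_sub_right (fun x : ℝ => x ^ e) c, sub_self,
      integral_rpow (Or.inl he), Real.zero_rpow (by linarith), sub_zero]
  · filter_upwards [ae_restrict_mem measurableSet_Ioc] with x hx
    exact Real.rpow_nonneg (by linarith [hx.1]) e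

end Stmt19Aux

open Stmt19Aux

set_option maxHeartbeats 2000000 in
theorem stmt_19 (H T : ℝ) (hH : H ∈ Set.Ioo (1/2 : ℝ) 1) (hT : 0 < T) :
    ∃ C : ℝ, 0 < C ∧ ∀ k : ℝ → ℝ, IntegrableOn (fun u => (k u)^2) (Set.Icc 0 T) →
      ∀ s t : ℝ, 0 ≤ s → s ≤ t → t ≤ T →
        |∫ r in s..t, ∫ u in (0:ℝ)..r, (r/u) ^ (H - 1/2) * (r - u) ^ (H - 3/2) * k u|
          ≤ C * (∫ u in (0:ℝ)..T, (k u)^2) ^ (1/2 : ℝ) *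
            ((t - s) ^ (H - 1/2) + (t - s) ^ (1/2 : ℝ)) := by
  obtain ⟨hH1, hH2⟩ := hH
  have h32 : H - 3/2 = H - 1/2 - 1 := by ring
  rw [h32]
  set a : ℝ := H - 1/2 with ha_def
  have ha0 : 0 < a := by rw [ha_def]; linarith
  have ha1 : 2 * a < 1 := by rw [ha_def]; linarith
  set C1 : ℝ := 2 ^ a / (1 - 2*a) + 2 ^ a / a with hC1_def
  have h2a : (0:ℝ) < 2 ^ a := Real.rpow_pos_of_pos (by norm_num) a
  have hC1pos : 0 < C1 := by
    have := div_pos h2a (by linarith : (0:ℝ) < 1 - 2*a)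
    have := div_pos h2a ha0
    rw [hC1_def]; linarith
  set C : ℝ := C1 * T ^ (1/2 : ℝ) / 2 + T ^ a / (2 * a) + 1 with hC_def
  have hCpos : 0 < C := by
    have h1 : 0 < C1 * T ^ (1/2:ℝ) / 2 :=
      div_pos (mul_pos hC1pos (Real.rpow_pos_of_pos hT _)) (by norm_num)
    have h2 : 0 < T ^ a / (2 * a) := div_pos (Real.rpow_pos_of_pos hT _) (by linarith)
    rw [hC_def]; linarith
  clear_value a C1 C
  refine ⟨C, hCpos, ?_⟩
  intro k hk s t hs hst htT
  set N : ℝ := (∫ u in (0:ℝ)..T, (k u)^2) ^ (1/2 : ℝ) with hN_def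
  have hIT : 0 ≤ ∫ u in (0:ℝ)..T, (k u)^2 :=
    intervalIntegral.integral_nonneg hT.le (fun u _ => sq_nonneg _)
  have hN0 : 0 ≤ N := Real.rpow_nonneg hIT _
  clear_value N
  rcases eq_or_lt_of_le hN0 with hNz | hNpos
  · -- degenerate case : N = 0
    have hX : (∫ u in (0:ℝ)..T, (k u)^2) = 0 := by
      by_contra h
      have hpos : 0 < ∫ u in (0:ℝ)..T, (k u)^2 := lt_of_le_of_ne hIT (Ne.symm h)
      have h2 := Real.rpow_pos_of_pos hpos (1/2:ℝ)
      rw [← hN_def] at h2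
      linarith
    have hk0 : ∀ᵐ u ∂(volume.restrict (Set.Ioc (0:ℝ) T)), k u = 0 := by
      have hint : IntegrableOn (fun u => (k u)^2) (Set.Ioc 0 T) :=
        hk.mono_set Set.Ioc_subset_Icc_self
      have h0 : ∫ u in Set.Ioc (0:ℝ) T, (k u)^2 = 0 := by
        rw [← intervalIntegral.integral_of_le hT.le]; exact hX
      have h1 := (MeasureTheory.integral_eq_zero_iff_of_nonneg
        (fun u => sq_nonneg (k u)) hint).mp h0
      filter_upwards [h1] with u hu
      exact pow_eq_zero_iff (two_ne_zero) |>.mp hu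
    have hz : ∫ r in s..t, ∫ u in (0:ℝ)..r, (r/u)^a * (r-u)^(a-1) * k u = 0 := by
      rw [intervalIntegral.integral_of_le hst]
      refine MeasureTheory.integral_eq_zero_of_ae ?_
      filter_upwards [ae_restrict_mem measurableSet_Ioc] with r hr
      rw [intervalIntegral.integral_of_le (le_trans hs hr.1.le)]
      refine MeasureTheory.integral_eq_zero_of_ae ?_
      have hsub : Set.Ioc (0:ℝ) r ⊆ Set.Ioc 0 T := Set.Ioc_subset_Ioc_right (hr.2.trans htT)
      filter_upwards [ae_restrict_of_ae_restrict_of_subset hsub hk0] with u hu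
      simp [hu]
    rw [hz, abs_zero, ← hNz, mul_zero, zero_mul]
  · -- main case
    have hNne : N ≠ 0 := ne_of_gt hNpos
    have hksq : AEMeasurable (fun u => (k u)^2) (volume.restrict (Set.Icc 0 T)) :=
      hk.aestronglyMeasurable.aemeasurable
    set m : ℝ → ℝ := fun u => Real.sqrt (hksq.mk _ u) with hm_def
    have hm_meas : Measurable m := (hksq.measurable_mk).sqrt
    have hm_nonneg : ∀ u, 0 ≤ m u := fun u => Real.sqrt_nonneg _
    have hm_abs : ∀ᵐ u ∂(volume.restrict (Set.Icc (0:ℝ) T)), |k u| = m u := by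
      filter_upwards [hksq.ae_eq_mk] with u hu
      simp only [hm_def]
      rw [← hu, Real.sqrt_sq_eq_abs]
    have hm_sq : ∀ᵐ u ∂(volume.restrict (Set.Icc (0:ℝ) T)), (m u)^2 = (k u)^2 := by
      filter_upwards [hksq.ae_eq_mk] with u hu
      simp only [hm_def]
      rw [← hu, Real.sq_sqrt (sq_nonneg _)]
    set D : Set (ℝ × ℝ) := {p | s < p.1 ∧ p.1 ≤ t ∧ 0 < p.2 ∧ p.2 ≤ p.1} with hD_def
    have hD_meas : MeasurableSet D := by
      have hDeq : D = {p : ℝ×ℝ | s < p.1} ∩ ({p | p.1 ≤ t} ∩ ({p | 0 < p.2} ∩ {p | p.2 ≤ p.1})) := by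
        ext p; simp only [hD_def, Set.mem_setOf_eq, Set.mem_inter_iff, and_assoc]
      rw [hDeq]
      exact (measurableSet_lt measurable_const measurable_fst).inter
        ((measurableSet_le measurable_fst measurable_const).inter
          ((measurableSet_lt measurable_const measurable_snd).inter
            (measurableSet_le measurable_snd measurable_fst)))
    set ψ : ℝ × ℝ → ℝ≥0∞ :=
      fun p => D.indicator (fun q => ENNReal.ofReal (q.1^a * (q.1 - q.2)^(a-1) * (m q.2)^2)) p
      with hψ_def
    have hψ_meas : Measurable ψ := Measurable.indicator (by fun_prop) hD_meas
    have h_amgm : ∀ u : ℝ, 0 < u → m u ≤ (N * u ^ (-a) + N⁻¹ * u ^ a * (m u)^2) / 2 := by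
      intro u hu
      have hx : 0 ≤ N * u ^ (-a) := mul_nonneg hN0 (Real.rpow_nonneg hu.le _)
      have hy : 0 ≤ N⁻¹ * u ^ a := mul_nonneg (inv_nonneg.mpr hN0) (Real.rpow_nonneg hu.le _)
      have hs1 : Real.sqrt (N * u ^ (-a)) ^ 2 = N * u ^ (-a) := Real.sq_sqrt hx
      have hs2 : Real.sqrt (N⁻¹ * u ^ a) ^ 2 = N⁻¹ * u ^ a := Real.sq_sqrt hy
      have hs3 : Real.sqrt (N * u ^ (-a)) * Real.sqrt (N⁻¹ * u ^ a) = 1 := by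
        rw [← Real.sqrt_mul hx]
        have h1 : N * u ^ (-a) * (N⁻¹ * u ^ a) = 1 := by
          have hu1 : u ^ (-a) * u ^ a = 1 := by
            rw [← Real.rpow_add hu]; simp
          have hN1 : N * N⁻¹ = 1 := mul_inv_cancel₀ hNne
          calc N * u ^ (-a) * (N⁻¹ * u ^ a) = (N * N⁻¹) * (u ^ (-a) * u ^ a) := by ring
            _ = 1 := by rw [hu1, hN1, mul_one]
        rw [h1, Real.sqrt_one]
      nlinarith [sq_nonneg (Real.sqrt (N * u ^ (-a)) - Real.sqrt (N⁻¹ * u ^ a) * m u),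
        hm_nonneg u, hs1, hs2, hs3]
    have hpt : ∀ r : ℝ, 0 < r → ∀ u : ℝ, u ∈ Set.Ioc (0:ℝ) r →
        (r/u)^a * (r-u)^(a-1) * m u
          ≤ N/2 * (r^a * (r-u)^(a-1) * u^(-(2*a))) + N⁻¹/2 * (r^a * (r-u)^(a-1) * (m u)^2) := by
      intro r hr u hu
      obtain ⟨hu0, hur⟩ := hu
      have hK_eq : (r/u)^a = r^a * u^(-a) := by
        rw [Real.div_rpow hr.le hu0.le, Real.rpow_neg hu0.le, div_eq_mul_inv]
      have h2aa : u^(-a) * u^(-a) = u^(-(2*a)) := by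
        rw [← Real.rpow_add hu0]; ring_nf
      have h1 : u^(-a) * u^a = 1 := by rw [← Real.rpow_add hu0]; simp
      have hrpow : (0:ℝ) ≤ (r - u)^(a-1) := Real.rpow_nonneg (by linarith) _
      have hK_nonneg : 0 ≤ (r/u)^a * (r-u)^(a-1) :=
        mul_nonneg (Real.rpow_nonneg (div_nonneg hr.le hu0.le) _) hrpow
      have key : (r/u)^a * (r-u)^(a-1) * ((N * u^(-a) + N⁻¹ * u^a * (m u)^2) / 2)
          = N/2 * (r^a * (r-u)^(a-1) * u^(-(2*a))) + N⁻¹/2 * (r^a * (r-u)^(a-1) * (m u)^2) := by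
        rw [hK_eq]
        linear_combination (N/2 * (r^a * (r-u)^(a-1))) * h2aa
          + (N⁻¹/2 * (r^a * (r-u)^(a-1) * (m u)^2)) * h1
      calc (r/u)^a * (r-u)^(a-1) * m u
          ≤ (r/u)^a * (r-u)^(a-1) * ((N * u^(-a) + N⁻¹ * u^a * (m u)^2) / 2) := by
            rw [mul_assoc, mul_assoc]
            exact mul_le_mul_of_nonneg_left
              (mul_le_mul_of_nonneg_left (h_amgm u hu0) hrpow)
              (Real.rpow_nonneg (div_nonneg hr.le hu0.le) _)
        _ = _ := key
    have J1bound : ∀ r : ℝ, 0 < r → r ≤ T →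
        (∫⁻ u in Set.Ioc (0:ℝ) r, ENNReal.ofReal (r^a * (r-u)^(a-1) * u^(-(2*a))))
          ≤ ENNReal.ofReal C1 := by
      intro r hr0 hrT
      have hr2 : (0:ℝ) < r/2 := by linarith
      have hE2 : r^a * (r/2)^(-a) = 2^a := by
        have hdd : (r:ℝ) / (r/2) = 2 := by
          field_simp
        rw [Real.rpow_neg hr2.le, ← div_eq_mul_inv, ← Real.div_rpow hr0.le hr2.le, hdd]
      have hsplit : Set.Ioc (0:ℝ) r = Set.Ioc 0 (r/2) ∪ Set.Ioc (r/2) r :=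
        (Set.Ioc_union_Ioc_eq_Ioc (by linarith) (by linarith)).symm
      rw [hsplit, lintegral_union measurableSet_Ioc (Set.Ioc_disjoint_Ioc_of_le le_rfl)]
      have hra : (0:ℝ) ≤ r^a := Real.rpow_nonneg hr0.le _
      have hp1 : (∫⁻ u in Set.Ioc (0:ℝ) (r/2), ENNReal.ofReal (r^a * (r-u)^(a-1) * u^(-(2*a))))
          ≤ ENNReal.ofReal (2^a / (1-2*a)) := by
        have hc1 : (0:ℝ) ≤ r^a * (r/2)^(a-1) := mul_nonneg hra (Real.rpow_nonneg hr2.le _)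
        calc (∫⁻ u in Set.Ioc (0:ℝ) (r/2), ENNReal.ofReal (r^a * (r-u)^(a-1) * u^(-(2*a))))
            ≤ ∫⁻ u in Set.Ioc (0:ℝ) (r/2), ENNReal.ofReal (r^a * (r/2)^(a-1) * u^(-(2*a))) := by
              refine setLIntegral_mono' measurableSet_Ioc fun u hu => ?_
              refine ENNReal.ofReal_le_ofReal ?_
              have h1 : (r-u)^(a-1) ≤ (r/2)^(a-1) :=
                Real.rpow_le_rpow_of_nonpos hr2 (by linarith [hu.2]) (by linarith)
              have h2 : (0:ℝ) ≤ u^(-(2*a)) := Real.rpow_nonneg hu.1.le _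
              calc r^a * (r-u)^(a-1) * u^(-(2*a)) = (r-u)^(a-1) * (r^a * u^(-(2*a))) := by ring
                _ ≤ (r/2)^(a-1) * (r^a * u^(-(2*a))) :=
                  mul_le_mul_of_nonneg_right h1 (mul_nonneg hra h2)
                _ = r^a * (r/2)^(a-1) * u^(-(2*a)) := by ring
          _ = ENNReal.ofReal (r^a * (r/2)^(a-1))
              * ∫⁻ u in Set.Ioc (0:ℝ) (r/2), ENNReal.ofReal (u^(-(2*a))) := by
              simp_rw [ENNReal.ofReal_mul hc1]
              rw [lintegral_const_mul' _ _ ENNReal.ofReal_ne_top]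
          _ = ENNReal.ofReal (r^a * (r/2)^(a-1))
              * ENNReal.ofReal ((r/2)^(-(2*a)+1) / (-(2*a)+1)) := by
              rw [lint_rpow (r/2) (-(2*a)) hr2.le (by linarith)]
          _ = ENNReal.ofReal (2^a / (1-2*a)) := by
              rw [← ENNReal.ofReal_mul hc1]
              congr 1
              have hcomb : (r/2)^(a-1) * (r/2)^(-(2*a)+1) = (r/2)^(-a) := by
                rw [← Real.rpow_add hr2]; congr 1; ring
              calc r^a * (r/2)^(a-1) * ((r/2)^(-(2*a)+1) / (-(2*a)+1))
                  = r^a * ((r/2)^(a-1) * (r/2)^(-(2*a)+1)) / (-(2*a)+1) := by ring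
                _ = r^a * (r/2)^(-a) / (-(2*a)+1) := by rw [hcomb]
                _ = 2^a / (1-2*a) := by rw [hE2]; congr 1; ring
      have hp2 : (∫⁻ u in Set.Ioc (r/2) r, ENNReal.ofReal (r^a * (r-u)^(a-1) * u^(-(2*a))))
          ≤ ENNReal.ofReal (2^a / a) := by
        have hc2 : (0:ℝ) ≤ r^a * (r/2)^(-(2*a)) := mul_nonneg hra (Real.rpow_nonneg hr2.le _)
        calc (∫⁻ u in Set.Ioc (r/2) r, ENNReal.ofReal (r^a * (r-u)^(a-1) * u^(-(2*a))))
            ≤ ∫⁻ u in Set.Ioc (r/2) r, ENNReal.ofReal (r^a * (r/2)^(-(2*a)) * (r-u)^(a-1)) := by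
              refine setLIntegral_mono' measurableSet_Ioc fun u hu => ?_
              refine ENNReal.ofReal_le_ofReal ?_
              have h1 : u^(-(2*a)) ≤ (r/2)^(-(2*a)) :=
                Real.rpow_le_rpow_of_nonpos hr2 hu.1.le (by linarith)
              have h2 : (0:ℝ) ≤ (r-u)^(a-1) := Real.rpow_nonneg (by linarith [hu.2]) _
              calc r^a * (r-u)^(a-1) * u^(-(2*a)) = u^(-(2*a)) * (r^a * (r-u)^(a-1)) := by ring
                _ ≤ (r/2)^(-(2*a)) * (r^a * (r-u)^(a-1)) :=
                  mul_le_mul_of_nonneg_right h1 (mul_nonneg hra h2)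
                _ = r^a * (r/2)^(-(2*a)) * (r-u)^(a-1) := by ring
          _ = ENNReal.ofReal (r^a * (r/2)^(-(2*a)))
              * ∫⁻ u in Set.Ioc (r/2) r, ENNReal.ofReal ((r-u)^(a-1)) := by
              simp_rw [ENNReal.ofReal_mul hc2]
              rw [lintegral_const_mul' _ _ ENNReal.ofReal_ne_top]
          _ = ENNReal.ofReal (r^a * (r/2)^(-(2*a)))
              * ENNReal.ofReal ((r - r/2)^(a-1+1) / (a-1+1)) := by
              rw [lint_rpow_sub (r/2) r (a-1) (by linarith) (by linarith)]
          _ = ENNReal.ofReal (2^a / a) := by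
              rw [← ENNReal.ofReal_mul hc2]
              congr 1
              have h4 : r - r/2 = r/2 := by ring
              have h5 : a - 1 + 1 = a := by ring
              rw [h4, h5]
              have hcomb2 : (r/2)^(-(2*a)) * (r/2)^a = (r/2)^(-a) := by
                rw [← Real.rpow_add hr2]; congr 1; ring
              calc r^a * (r/2)^(-(2*a)) * ((r/2)^a / a)
                  = r^a * ((r/2)^(-(2*a)) * (r/2)^a) / a := by ring
                _ = r^a * (r/2)^(-a) / a := by rw [hcomb2]
                _ = 2^a / a := by rw [hE2]
      calc (∫⁻ u in Set.Ioc (0:ℝ) (r/2), ENNReal.ofReal (r^a * (r-u)^(a-1) * u^(-(2*a))))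
            + ∫⁻ u in Set.Ioc (r/2) r, ENNReal.ofReal (r^a * (r-u)^(a-1) * u^(-(2*a)))
          ≤ ENNReal.ofReal (2^a / (1-2*a)) + ENNReal.ofReal (2^a / a) := add_le_add hp1 hp2
        _ = ENNReal.ofReal C1 := by
            rw [← ENNReal.ofReal_add (div_nonneg h2a.le (by linarith)) (div_nonneg h2a.le ha0.le),
              hC1_def]
    have hsec : ∀ r ∈ Set.Ioc s t,
        (∫⁻ u, ψ (r, u)) = ∫⁻ u in Set.Ioc (0:ℝ) r, ENNReal.ofReal (r^a * (r-u)^(a-1) * (m u)^2) := by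
      intro r hr
      rw [← lintegral_indicator measurableSet_Ioc]
      apply lintegral_congr
      intro u
      by_cases hu : u ∈ Set.Ioc (0:ℝ) r
      · have hmemD : (r, u) ∈ D := ⟨hr.1, hr.2, hu.1, hu.2⟩
        simp only [hψ_def, Set.indicator_of_mem hu, Set.indicator_of_mem hmemD]
      · have hnotD : (r, u) ∉ D := fun h => hu ⟨h.2.2.1, h.2.2.2⟩
        simp only [hψ_def, Set.indicator_of_notMem hu, Set.indicator_of_notMem hnotD]
    have hPhi : ∀ r ∈ Set.Ioc s t,
        ENNReal.ofReal |∫ u in (0:ℝ)..r, (r/u)^a * (r-u)^(a-1) * k u|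
          ≤ ENNReal.ofReal (N/2 * C1) + ENNReal.ofReal (N⁻¹/2) * ∫⁻ u, ψ (r, u) := by
      intro r hr
      have hr0 : 0 < r := lt_of_le_of_lt hs hr.1
      have hrT : r ≤ T := hr.2.trans htT
      set X : ℝ≥0∞ := ∫⁻ u in Set.Ioc (0:ℝ) r,
        ENNReal.ofReal ‖(r/u)^a * (r-u)^(a-1) * k u‖ with hX_def
      have habs : |∫ u in (0:ℝ)..r, (r/u)^a * (r-u)^(a-1) * k u| ≤ X.toReal := by
        rw [intervalIntegral.integral_of_le hr0.le, ← Real.norm_eq_abs]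
        exact MeasureTheory.norm_integral_le_lintegral_norm _
      have hXle : X ≤ ENNReal.ofReal (N/2 * C1) + ENNReal.ofReal (N⁻¹/2) * ∫⁻ u, ψ (r, u) := by
        have hstep2 : X = ∫⁻ u in Set.Ioc (0:ℝ) r,
            ENNReal.ofReal ((r/u)^a * (r-u)^(a-1) * m u) := by
          rw [hX_def]
          apply lintegral_congr_ae
          have hsub : Set.Ioc (0:ℝ) r ⊆ Set.Icc 0 T := fun u hu => ⟨hu.1.le, hu.2.trans hrT⟩
          filter_upwards [ae_restrict_of_ae_restrict_of_subset hsub hm_abs,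
            ae_restrict_mem measurableSet_Ioc] with u hu1 hu2
          have hK_nonneg : (0:ℝ) ≤ (r/u)^a * (r-u)^(a-1) :=
            mul_nonneg (Real.rpow_nonneg (div_nonneg hr0.le hu2.1.le) _)
              (Real.rpow_nonneg (by linarith [hu2.2]) _)
          rw [Real.norm_eq_abs, abs_mul, abs_of_nonneg hK_nonneg, hu1]
        rw [hstep2]
        have hstep3 : (∫⁻ u in Set.Ioc (0:ℝ) r, ENNReal.ofReal ((r/u)^a * (r-u)^(a-1) * m u))
            ≤ ∫⁻ u in Set.Ioc (0:ℝ) r,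
                (ENNReal.ofReal (N/2 * (r^a * (r-u)^(a-1) * u^(-(2*a))))
                  + ENNReal.ofReal (N⁻¹/2 * (r^a * (r-u)^(a-1) * (m u)^2))) := by
          apply lintegral_mono_ae
          filter_upwards [ae_restrict_mem measurableSet_Ioc] with u hu
          calc ENNReal.ofReal ((r/u)^a * (r-u)^(a-1) * m u)
              ≤ ENNReal.ofReal (N/2 * (r^a * (r-u)^(a-1) * u^(-(2*a)))
                  + N⁻¹/2 * (r^a * (r-u)^(a-1) * (m u)^2)) :=
                ENNReal.ofReal_le_ofReal (hpt r hr0 u hu)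
            _ ≤ _ := ENNReal.ofReal_add_le
        refine le_trans hstep3 ?_
        rw [lintegral_add_left (by fun_prop)]
        have hpc1 : (∫⁻ u in Set.Ioc (0:ℝ) r,
              ENNReal.ofReal (N/2 * (r^a * (r-u)^(a-1) * u^(-(2*a)))))
            ≤ ENNReal.ofReal (N/2 * C1) := by
          simp_rw [ENNReal.ofReal_mul (by positivity : (0:ℝ) ≤ N/2)]
          rw [lintegral_const_mul' _ _ ENNReal.ofReal_ne_top]
          exact mul_le_mul_right (J1bound r hr0 hrT) _
        have hpc2 : (∫⁻ u in Set.Ioc (0:ℝ) r,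
              ENNReal.ofReal (N⁻¹/2 * (r^a * (r-u)^(a-1) * (m u)^2)))
            = ENNReal.ofReal (N⁻¹/2) * ∫⁻ u, ψ (r, u) := by
          simp_rw [ENNReal.ofReal_mul (by positivity : (0:ℝ) ≤ N⁻¹/2)]
          rw [lintegral_const_mul' _ _ ENNReal.ofReal_ne_top, hsec r hr]
        rw [hpc2]
        exact add_le_add hpc1 le_rfl
      calc ENNReal.ofReal |∫ u in (0:ℝ)..r, (r/u)^a * (r-u)^(a-1) * k u|
          ≤ ENNReal.ofReal X.toReal := ENNReal.ofReal_le_ofReal habs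
        _ ≤ X := ENNReal.ofReal_toReal_le
        _ ≤ _ := hXle
    have hts0 : (0:ℝ) ≤ t - s := by linarith
    have hclaim3 : ∀ u : ℝ, (∫⁻ r, ψ (r, u))
        ≤ (Set.Ioc (0:ℝ) t).indicator
            (fun u => ENNReal.ofReal (T^a * ((t-s)^a / a)) * ENNReal.ofReal ((m u)^2)) u := by
      intro u
      by_cases hu : u ∈ Set.Ioc (0:ℝ) t
      · rw [Set.indicator_of_mem hu]
        set c : ℝ := max s u with hc_def
        have hsc : s ≤ c := le_max_left _ _
        have huc : u ≤ c := le_max_right _ _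
        have hct : c ≤ t := max_le hst hu.2
        have hptw : ∀ r : ℝ, ψ (r, u)
            ≤ (Set.Ioc c t).indicator
                (fun r => ENNReal.ofReal ((m u)^2 * (T^a * (r - c)^(a-1)))) r := by
          intro r
          by_cases hD : (r, u) ∈ D
          · obtain ⟨h1, h2, h3, h4⟩ := hD
            have h1' : s < r := h1
            have h2' : r ≤ t := h2
            have h3' : (0:ℝ) < u := h3
            have h4' : u ≤ r := h4
            have hval : ψ (r, u) = ENNReal.ofReal (r^a * (r-u)^(a-1) * (m u)^2) :=
              Set.indicator_of_mem (show (r,u) ∈ D from ⟨h1,h2,h3,h4⟩) _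
            rcases eq_or_lt_of_le h4' with heq | hlt
            · have hru0 : r - u = 0 := sub_eq_zero.mpr heq.symm
              have hz : ψ (r, u) = 0 := by
                rw [hval, hru0, Real.zero_rpow (show a - 1 ≠ 0 by intro hcon; linarith)]
                simp
              rw [hz]; exact zero_le
            · have hrc : c < r := max_lt h1' hlt
              rw [Set.indicator_of_mem (show r ∈ Set.Ioc c t from ⟨hrc, h2'⟩), hval]
              apply ENNReal.ofReal_le_ofReal
              have hTa : r^a ≤ T^a :=
                Real.rpow_le_rpow (by linarith) (h2'.trans htT) ha0.le
              have hru : (r-u)^(a-1) ≤ (r-c)^(a-1) :=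
                Real.rpow_le_rpow_of_nonpos (by linarith) (by linarith) (by linarith)
              have h5 : (0:ℝ) ≤ (r-u)^(a-1) := Real.rpow_nonneg (by linarith) _
              have h6 : (0:ℝ) ≤ T^a := Real.rpow_nonneg hT.le _
              calc r^a * (r-u)^(a-1) * (m u)^2 = (m u)^2 * (r^a * (r-u)^(a-1)) := by ring
                _ ≤ (m u)^2 * (T^a * (r-c)^(a-1)) :=
                  mul_le_mul_of_nonneg_left (mul_le_mul hTa hru h5 h6) (sq_nonneg _)
          · simp only [hψ_def, Set.indicator_of_notMem hD]
            exact zero_le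
        calc (∫⁻ r, ψ (r, u))
            ≤ ∫⁻ r, (Set.Ioc c t).indicator
                (fun r => ENNReal.ofReal ((m u)^2 * (T^a * (r - c)^(a-1)))) r :=
              lintegral_mono hptw
          _ = ∫⁻ r in Set.Ioc c t, ENNReal.ofReal ((m u)^2 * (T^a * (r - c)^(a-1))) :=
              lintegral_indicator measurableSet_Ioc _
          _ = ENNReal.ofReal ((m u)^2 * T^a)
              * ∫⁻ r in Set.Ioc c t, ENNReal.ofReal ((r - c)^(a-1)) := by
              simp_rw [show ∀ r : ℝ, (m u)^2 * (T^a * (r - c)^(a-1))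
                  = ((m u)^2 * T^a) * (r - c)^(a-1) from fun r => by ring]
              simp_rw [ENNReal.ofReal_mul (mul_nonneg (sq_nonneg (m u)) (Real.rpow_nonneg hT.le a))]
              rw [lintegral_const_mul' _ _ ENNReal.ofReal_ne_top]
          _ = ENNReal.ofReal ((m u)^2 * T^a)
              * ENNReal.ofReal ((t - c)^(a-1+1) / (a-1+1)) := by
              rw [lint_rpow_sub' c t (a-1) hct (by linarith)]
          _ ≤ ENNReal.ofReal (T^a * ((t-s)^a / a)) * ENNReal.ofReal ((m u)^2) := by
              have e1 : a - 1 + 1 = a := by ring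
              rw [e1,
                ← ENNReal.ofReal_mul (mul_nonneg (sq_nonneg (m u)) (Real.rpow_nonneg hT.le a)),
                ← ENNReal.ofReal_mul (mul_nonneg (Real.rpow_nonneg hT.le a)
                  (div_nonneg (Real.rpow_nonneg hts0 a) ha0.le))]
              apply ENNReal.ofReal_le_ofReal
              have h7 : (t-c)^a ≤ (t-s)^a :=
                Real.rpow_le_rpow (by linarith) (by linarith) ha0.le
              have h6 : (0:ℝ) ≤ T^a := Real.rpow_nonneg hT.le _
              calc (m u)^2 * T^a * ((t-c)^a / (a)) = (m u)^2 * T^a / a * (t-c)^a := by ring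
                _ ≤ (m u)^2 * T^a / a * (t-s)^a := by
                    apply mul_le_mul_of_nonneg_left h7
                    positivity
                _ = T^a * ((t-s)^a / a) * (m u)^2 := by ring
      · rw [Set.indicator_of_notMem hu]
        have hz : ∀ r : ℝ, ψ (r, u) = 0 := by
          intro r
          have hnotD : (r, u) ∉ D := fun h => hu ⟨h.2.2.1, h.2.2.2.trans h.2.1⟩
          simp only [hψ_def, Set.indicator_of_notMem hnotD]
        simp [hz]
    have hm2int : (∫⁻ u in Set.Ioc (0:ℝ) t, ENNReal.ofReal ((m u)^2))
        ≤ ENNReal.ofReal (N^2) := by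
      have hsub : Set.Ioc (0:ℝ) t ⊆ Set.Icc 0 T := fun u hu => ⟨hu.1.le, hu.2.trans htT⟩
      have h1 : (∫⁻ u in Set.Ioc (0:ℝ) t, ENNReal.ofReal ((m u)^2))
          = ∫⁻ u in Set.Ioc (0:ℝ) t, ENNReal.ofReal ((k u)^2) := by
        apply lintegral_congr_ae
        filter_upwards [ae_restrict_of_ae_restrict_of_subset hsub hm_sq] with u hu
        rw [hu]
      rw [h1]
      have hint : IntegrableOn (fun u => (k u)^2) (Set.Ioc 0 t) := hk.mono_set hsub
      rw [← MeasureTheory.ofReal_integral_eq_lintegral_ofReal hint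
        (ae_of_all _ fun u => sq_nonneg (k u))]
      apply ENNReal.ofReal_le_ofReal
      have h2 : (∫ u in Set.Ioc (0:ℝ) t, (k u)^2) ≤ ∫ u in Set.Ioc (0:ℝ) T, (k u)^2 :=
        MeasureTheory.setIntegral_mono_set (hk.mono_set Set.Ioc_subset_Icc_self)
          (Filter.Eventually.of_forall fun u => sq_nonneg (k u))
          (HasSubset.Subset.eventuallyLE (Set.Ioc_subset_Ioc_right htT))
      have h3 : (∫ u in Set.Ioc (0:ℝ) T, (k u)^2) = N^2 := by
        rw [← intervalIntegral.integral_of_le hT.le, hN_def,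
          ← Real.rpow_natCast ((∫ u in (0:ℝ)..T, (k u)^2) ^ (1/2:ℝ)) 2,
          ← Real.rpow_mul hIT]
        norm_num
      linarith
    have hswap : (∫⁻ r, ∫⁻ u, ψ (r, u)) = ∫⁻ u, ∫⁻ r, ψ (r, u) :=
      lintegral_lintegral_swap hψ_meas.aemeasurable
    have hnn1 : (0:ℝ) ≤ N/2 * C1 := mul_nonneg (div_nonneg hN0 (by norm_num)) hC1pos.le
    have hnn2 : (0:ℝ) ≤ N⁻¹/2 := div_nonneg (inv_nonneg.mpr hN0) (by norm_num)
    have hnn3 : (0:ℝ) ≤ T^a * ((t-s)^a / a) :=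
      mul_nonneg (Real.rpow_nonneg hT.le a) (div_nonneg (Real.rpow_nonneg hts0 a) ha0.le)
    have hmain : (∫⁻ r in Set.Ioc s t,
          ENNReal.ofReal |∫ u in (0:ℝ)..r, (r/u)^a * (r-u)^(a-1) * k u|)
        ≤ ENNReal.ofReal (N/2 * C1 * (t-s))
          + ENNReal.ofReal (N⁻¹/2 * (T^a * ((t-s)^a / a) * N^2)) := by
      calc (∫⁻ r in Set.Ioc s t,
            ENNReal.ofReal |∫ u in (0:ℝ)..r, (r/u)^a * (r-u)^(a-1) * k u|)
          ≤ ∫⁻ r in Set.Ioc s t,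
              (ENNReal.ofReal (N/2 * C1) + ENNReal.ofReal (N⁻¹/2) * ∫⁻ u, ψ (r, u)) :=
            setLIntegral_mono
              (measurable_const.add (measurable_const.mul hψ_meas.lintegral_prod_right'))
              hPhi
        _ = ENNReal.ofReal (N/2 * C1) * volume (Set.Ioc s t)
            + ENNReal.ofReal (N⁻¹/2) * ∫⁻ r in Set.Ioc s t, ∫⁻ u, ψ (r, u) := by
            rw [lintegral_add_left measurable_const, setLIntegral_const,
              lintegral_const_mul' _ _ ENNReal.ofReal_ne_top]
        _ ≤ ENNReal.ofReal (N/2 * C1) * ENNReal.ofReal (t-s)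
            + ENNReal.ofReal (N⁻¹/2) * ∫⁻ u, ∫⁻ r, ψ (r, u) := by
            rw [Real.volume_Ioc, ← hswap]
            exact add_le_add le_rfl
              (mul_le_mul_right (setLIntegral_le_lintegral _ _) _)
        _ ≤ ENNReal.ofReal (N/2 * C1) * ENNReal.ofReal (t-s)
            + ENNReal.ofReal (N⁻¹/2)
              * (ENNReal.ofReal (T^a * ((t-s)^a / a)) * ENNReal.ofReal (N^2)) := by
            refine add_le_add le_rfl (mul_le_mul_right ?_ _)
            calc (∫⁻ u, ∫⁻ r, ψ (r, u))
                ≤ ∫⁻ u, (Set.Ioc (0:ℝ) t).indicator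
                    (fun u => ENNReal.ofReal (T^a * ((t-s)^a / a))
                      * ENNReal.ofReal ((m u)^2)) u :=
                  lintegral_mono hclaim3
              _ = ENNReal.ofReal (T^a * ((t-s)^a / a))
                  * ∫⁻ u in Set.Ioc (0:ℝ) t, ENNReal.ofReal ((m u)^2) := by
                  rw [lintegral_indicator measurableSet_Ioc,
                    lintegral_const_mul' _ _ ENNReal.ofReal_ne_top]
              _ ≤ _ := mul_le_mul_right hm2int _
        _ = ENNReal.ofReal (N/2 * C1 * (t-s))
            + ENNReal.ofReal (N⁻¹/2 * (T^a * ((t-s)^a / a) * N^2)) := by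
            rw [← ENNReal.ofReal_mul hnn1, ← ENNReal.ofReal_mul hnn3,
              ← ENNReal.ofReal_mul hnn2]
    have hfinal : |∫ r in s..t, ∫ u in (0:ℝ)..r, (r/u)^a * (r-u)^(a-1) * k u|
        ≤ N/2 * C1 * (t-s) + N⁻¹/2 * (T^a * ((t-s)^a / a) * N^2) := by
      have h0 : |∫ r in s..t, ∫ u in (0:ℝ)..r, (r/u)^a * (r-u)^(a-1) * k u|
          ≤ (∫⁻ r in Set.Ioc s t,
              ENNReal.ofReal |∫ u in (0:ℝ)..r, (r/u)^a * (r-u)^(a-1) * k u|).toReal := by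
        rw [intervalIntegral.integral_of_le hst]
        have h00 := MeasureTheory.norm_integral_le_lintegral_norm
          (μ := volume.restrict (Set.Ioc s t))
          (fun r => ∫ u in (0:ℝ)..r, (r/u)^a * (r-u)^(a-1) * k u)
        simpa [Real.norm_eq_abs] using h00
      refine h0.trans ?_
      have hne : (ENNReal.ofReal (N/2 * C1 * (t-s))
          + ENNReal.ofReal (N⁻¹/2 * (T^a * ((t-s)^a / a) * N^2))) ≠ ⊤ :=
        ENNReal.add_ne_top.mpr ⟨ENNReal.ofReal_ne_top, ENNReal.ofReal_ne_top⟩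
      have h1 := ENNReal.toReal_mono hne hmain
      rw [ENNReal.toReal_add ENNReal.ofReal_ne_top ENNReal.ofReal_ne_top,
        ENNReal.toReal_ofReal (mul_nonneg hnn1 hts0),
        ENNReal.toReal_ofReal (mul_nonneg hnn2
          (mul_nonneg hnn3 (sq_nonneg N)))] at h1
      exact h1
    refine hfinal.trans ?_
    have hNinv : N⁻¹ * N^2 = N := by
      rw [pow_two, ← mul_assoc, inv_mul_cancel₀ hNne, one_mul]
    have hhalf : (t-s) ≤ T^(1/2:ℝ) * (t-s)^(1/2:ℝ) := by
      have h1 : (t-s) = (t-s)^(1/2:ℝ) * (t-s)^(1/2:ℝ) := by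
        rw [← Real.rpow_add' hts0 (by norm_num : (1/2:ℝ) + 1/2 ≠ 0)]
        norm_num
      calc (t-s) = (t-s)^(1/2:ℝ) * (t-s)^(1/2:ℝ) := h1
        _ ≤ T^(1/2:ℝ) * (t-s)^(1/2:ℝ) :=
          mul_le_mul_of_nonneg_right
            (Real.rpow_le_rpow hts0 (by linarith) (by norm_num))
            (Real.rpow_nonneg hts0 _)
    have hX : (0:ℝ) ≤ (t-s)^a := Real.rpow_nonneg hts0 _
    have hY : (0:ℝ) ≤ (t-s)^(1/2:ℝ) := Real.rpow_nonneg hts0 _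
    have e2 : N⁻¹/2 * (T^a * ((t-s)^a / a) * N^2) = (T^a/(2*a)) * ((t-s)^a * N) := by
      calc N⁻¹/2 * (T^a * ((t-s)^a / a) * N^2)
          = (N⁻¹ * N^2) * (T^a * (t-s)^a) / (2*a) := by ring
        _ = N * (T^a * (t-s)^a) / (2*a) := by rw [hNinv]
        _ = (T^a/(2*a)) * ((t-s)^a * N) := by ring
    have hterm1 : N/2*C1*(t-s) ≤ (C1 * T^(1/2:ℝ)/2) * ((t-s)^(1/2:ℝ) * N) := by
      calc N/2*C1*(t-s) = (N/2*C1)*(t-s) := by ring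
        _ ≤ (N/2*C1)*(T^(1/2:ℝ)*(t-s)^(1/2:ℝ)) :=
          mul_le_mul_of_nonneg_left hhalf hnn1
        _ = (C1 * T^(1/2:ℝ)/2) * ((t-s)^(1/2:ℝ) * N) := by ring
    have hc1C : C1 * T^(1/2:ℝ)/2 ≤ C := by
      have hq : 0 < T^a/(2*a) := div_pos (Real.rpow_pos_of_pos hT _) (by linarith)
      rw [hC_def]; linarith
    have hc2C : T^a/(2*a) ≤ C := by
      have hq : 0 < C1 * T^(1/2:ℝ)/2 :=
        div_pos (mul_pos hC1pos (Real.rpow_pos_of_pos hT _)) (by norm_num)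
      rw [hC_def]; linarith
    calc N/2*C1*(t-s) + N⁻¹/2 * (T^a * ((t-s)^a / a) * N^2)
        ≤ (C1 * T^(1/2:ℝ)/2) * ((t-s)^(1/2:ℝ) * N) + (T^a/(2*a)) * ((t-s)^a * N) := by
          rw [e2]; exact add_le_add hterm1 le_rfl
      _ ≤ C * ((t-s)^(1/2:ℝ) * N) + C * ((t-s)^a * N) :=
          add_le_add (mul_le_mul_of_nonneg_right hc1C (mul_nonneg hY hN0))
            (mul_le_mul_of_nonneg_right hc2C (mul_nonneg hX hN0))
      _ = C * N * ((t-s)^a + (t-s)^(1/2:ℝ)) := by ring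
end
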